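/- There exists an octahedral system Ω without isolated vertex on vertex sets V_1, V_2, V_3 with |V_1| = |V_2| = |V_3| = 3 that is not realisable: there is no colourful point configuration S_1, S_2, S_3 in ℝ² in general position together with bijections φ_i : V_i → S_i (i = 1,2,3) such that the edges of Ω are exactly the triples (v_1, v_2, v_3) ∈ V_1 × V_2 × V_3 with 0 ∈ conv{φ_1(v_1), φ_2(v_2), φ_3(v_3)}. -/

import Mathlib

namespace NonrealAux

abbrev Pt := EuclideanSpace ℝ (Fin 2)

noncomputable instance : DecidableEq Pt := Classical.decEq _

noncomputable def det2 (p q : Pt) : ℝ := p 0 * q 1 - p 1 * q 0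

lemma det2_cramer (a b c : Pt) : det2 b c • a + det2 c a • b + det2 a b • c = 0 := by
  ext i
  fin_cases i <;>
    simp only [det2, PiLp.add_apply, PiLp.smul_apply, PiLp.zero_apply, smul_eq_mul,
      Fin.mk_zero, Fin.mk_one, Fin.isValue] <;> ring

lemma sgn_trans {a b c : ℝ} (h1 : 0 < a * b) (h2 : 0 < b * c) : 0 < a * c := by
  rcases mul_pos_iff.mp h1 with ⟨ha, hb⟩ | ⟨ha, hb⟩ <;>
    rcases mul_pos_iff.mp h2 with ⟨hb', hc⟩ | ⟨hb', hc⟩ <;>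
    first
      | exact mul_pos ha hc
      | exact mul_pos_of_neg_of_neg ha hc
      | linarith

lemma exists_smul_of_det2_eq_zero {p q : Pt} (hp : p ≠ 0) (h : det2 p q = 0) :
    ∃ t : ℝ, q = t • p := by
  have hp' : p 0 ≠ 0 ∨ p 1 ≠ 0 := by
    by_contra hc
    push_neg at hc
    exact hp (PiLp.ext fun i => by fin_cases i <;> simp [hc.1, hc.2])
  unfold det2 at h
  rcases hp' with h0 | h1
  · refine ⟨q 0 / p 0, PiLp.ext fun i => ?_⟩
    fin_cases i <;> simp only [PiLp.smul_apply, smul_eq_mul, Fin.mk_zero, Fin.mk_one, Fin.isValue] <;> field_simp <;> linarith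
  · refine ⟨q 1 / p 1, PiLp.ext fun i => ?_⟩
    fin_cases i <;> simp only [PiLp.smul_apply, smul_eq_mul, Fin.mk_zero, Fin.mk_one, Fin.isValue] <;> field_simp <;> linarith

lemma collinear_of_smul {p q : Pt} {t : ℝ} (h : q = t • p) :
    Collinear ℝ ({0, p, q} : Set Pt) := by
  rw [collinear_iff_of_mem (Set.mem_insert 0 _)]
  refine ⟨p, fun x hx => ?_⟩
  rcases hx with rfl | rfl | rfl
  · exact ⟨0, by simp⟩
  · exact ⟨1, by simp⟩
  · exact ⟨t, by simp [h]⟩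

lemma range_eq_triple (f : Fin 3 → Pt) :
    Set.range f = (({f 0, f 1, f 2} : Finset Pt) : Set Pt) := by
  ext x
  constructor
  · rintro ⟨i, rfl⟩
    fin_cases i <;> simp
  · intro hx
    simp only [Finset.coe_insert, Finset.coe_singleton, Set.mem_insert_iff,
      Set.mem_singleton_iff] at hx
    rcases hx with rfl | rfl | rfl
    exacts [⟨0, rfl⟩, ⟨1, rfl⟩, ⟨2, rfl⟩]

lemma extract_weights {a b c : Pt} (hab : a ≠ b) (hac : a ≠ c) (hbc : b ≠ c)
    (h : (0 : Pt) ∈ convexHull ℝ (({a, b, c} : Finset Pt) : Set Pt)) :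
    ∃ α β γ : ℝ, 0 ≤ α ∧ 0 ≤ β ∧ 0 ≤ γ ∧ α + β + γ = 1 ∧ α • a + β • b + γ • c = 0 := by
  rw [Finset.mem_convexHull'] at h
  obtain ⟨w, hw0, hw1, hws⟩ := h
  have hna : a ∉ ({b, c} : Finset Pt) := by simp [hab, hac]
  have hnb : b ∉ ({c} : Finset Pt) := by simp [hbc]
  rw [Finset.sum_insert hna, Finset.sum_insert hnb, Finset.sum_singleton] at hw1 hws
  exact ⟨w a, w b, w c, hw0 a (by simp), hw0 b (by simp), hw0 c (by simp),
    by linarith, by rw [← add_assoc] at hws; exact hws⟩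

lemma edge_products {a b c : Pt} (hab : det2 a b ≠ 0) (hbc : det2 b c ≠ 0)
    (hca : det2 c a ≠ 0)
    {α β γ : ℝ} (hα : 0 ≤ α) (hβ : 0 ≤ β) (hγ : 0 ≤ γ) (hsum : α + β + γ = 1)
    (hv : α • a + β • b + γ • c = 0) :
    0 < det2 a b * det2 b c ∧ 0 < det2 b c * det2 c a := by
  have h0 : α * a 0 + β * b 0 + γ * c 0 = 0 := by
    have := congrArg (fun v : Pt => v 0) hv
    simpa [PiLp.add_apply, PiLp.smul_apply] using this
  have h1 : α * a 1 + β * b 1 + γ * c 1 = 0 := by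
    have := congrArg (fun v : Pt => v 1) hv
    simpa [PiLp.add_apply, PiLp.smul_apply] using this
  have r1 : β * det2 b c = α * det2 c a := by
    unfold det2; linear_combination (c 1) * h0 - (c 0) * h1
  have r2 : γ * det2 b c = α * det2 a b := by
    unfold det2; linear_combination (b 0) * h1 - (b 1) * h0
  have hα0 : α ≠ 0 := by
    intro h
    rw [h, zero_mul] at r1 r2
    have hb0 := (mul_eq_zero.mp r1).resolve_right hbc
    have hc0 := (mul_eq_zero.mp r2).resolve_right hbc
    rw [h, hb0, hc0] at hsum
    norm_num at hsum
  have hαp : 0 < α := lt_of_le_of_ne hα (Ne.symm hα0)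
  have hβp : 0 < β := by
    refine lt_of_le_of_ne hβ (Ne.symm fun h => ?_)
    rw [h, zero_mul] at r1
    rcases mul_eq_zero.mp r1.symm with h' | h'
    exacts [hα0 h', hca h']
  have hγp : 0 < γ := by
    refine lt_of_le_of_ne hγ (Ne.symm fun h => ?_)
    rw [h, zero_mul] at r2
    rcases mul_eq_zero.mp r2.symm with h' | h'
    exacts [hα0 h', hab h']
  constructor
  · have hsq : 0 < det2 b c * det2 b c := mul_self_pos.mpr hbc
    have key : α * (det2 a b * det2 b c) = γ * (det2 b c * det2 b c) := by
      linear_combination (-(det2 b c)) * r2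
    nlinarith [key, hαp, hγp, hsq]
  · have hsq : 0 < det2 c a * det2 c a := mul_self_pos.mpr hca
    have key : β * (det2 b c * det2 c a) = α * (det2 c a * det2 c a) := by
      linear_combination (det2 c a) * r1
    nlinarith [key, hαp, hβp, hsq]

lemma mem_conv_of_signs (f : Fin 3 → Pt) {a b c : Pt} (hf0 : f 0 = a) (hf1 : f 1 = b)
    (hf2 : f 2 = c) (h1 : 0 < det2 a b * det2 b c) (h2 : 0 < det2 b c * det2 c a) :
    (0 : Pt) ∈ convexHull ℝ (Set.range f) := by
  rcases mul_pos_iff.mp h1 with ⟨hab, hbc⟩ | ⟨hab, hbc⟩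
  · have hca : 0 < det2 c a := by
      rcases mul_pos_iff.mp h2 with ⟨_, h⟩ | ⟨h, _⟩
      · exact h
      · linarith
    have hz : Finset.univ.centerMass ![det2 b c, det2 c a, det2 a b] f = 0 := by
      rw [Finset.centerMass]
      have hsum0 : ∑ i, ![det2 b c, det2 c a, det2 a b] i • f i = 0 := by
        rw [Fin.sum_univ_three]
        simp only [Matrix.cons_val_zero, Matrix.cons_val_one, Matrix.head_cons,
          Matrix.cons_val_two, Matrix.tail_cons]
        rw [hf0, hf1, hf2]
        exact det2_cramer a b c
      rw [hsum0, smul_zero]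
    rw [← hz]
    refine Finset.centerMass_mem_convexHull _ (fun i _ => ?_) ?_ (fun i _ => Set.mem_range_self i)
    · fin_cases i <;> simp <;> linarith
    · rw [Fin.sum_univ_three]
      simp only [Matrix.cons_val_zero, Matrix.cons_val_one, Matrix.head_cons,
        Matrix.cons_val_two, Matrix.tail_cons]
      linarith
  · have hca : det2 c a < 0 := by
      rcases mul_pos_iff.mp h2 with ⟨h, _⟩ | ⟨_, h⟩
      · linarith
      · exact h
    have hz : Finset.univ.centerMass ![-det2 b c, -det2 c a, -det2 a b] f = 0 := by
      rw [Finset.centerMass]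
      have hsum0 : ∑ i, ![-det2 b c, -det2 c a, -det2 a b] i • f i = 0 := by
        rw [Fin.sum_univ_three]
        simp only [Matrix.cons_val_zero, Matrix.cons_val_one, Matrix.head_cons,
          Matrix.cons_val_two, Matrix.tail_cons]
        rw [hf0, hf1, hf2]
        have := det2_cramer a b c
        rw [neg_smul, neg_smul, neg_smul, ← neg_add, ← neg_add, this, neg_zero]
      rw [hsum0, smul_zero]
    rw [← hz]
    refine Finset.centerMass_mem_convexHull _ (fun i _ => ?_) ?_ (fun i _ => Set.mem_range_self i)
    · fin_cases i <;> simp <;> linarith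
    · rw [Fin.sum_univ_three]
      simp only [Matrix.cons_val_zero, Matrix.cons_val_one, Matrix.head_cons,
        Matrix.cons_val_two, Matrix.tail_cons]
      linarith

end NonrealAux

def Voct : Fin 3 → Finset ℕ := ![{0, 1, 2}, {3, 4, 5}, {6, 7, 8}]

def Eoct : Finset (Fin 3 → ℕ) :=
  {![0,3,6], ![0,3,7], ![0,3,8], ![0,4,7], ![1,3,8], ![1,4,7], ![1,4,8], ![1,5,8], ![2,4,7]}


/-- An octahedral system: an `n`-uniform `n`-partite hypergraph on the vertex sets `V i`
(edges pick one vertex from each `V i`) satisfying the parity condition. -/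
def IsOctahedralSystem {α : Type*} [DecidableEq α] {n : ℕ}
    (V : Fin n → Finset α) (E : Finset (Fin n → α)) : Prop :=
  (∀ e ∈ E, ∀ i, e i ∈ V i) ∧
  ∀ X : Fin n → Finset α, (∀ i, X i ⊆ V i) → (∀ i, (X i).card = 2) →
    Even ((E.filter fun e => ∀ i, e i ∈ X i).card)

/-- Every vertex belongs to at least one edge. -/
def NoIsolatedVertex {α : Type*} {n : ℕ}
    (V : Fin n → Finset α) (E : Finset (Fin n → α)) : Prop :=
  ∀ i : Fin n, ∀ v ∈ V i, ∃ e ∈ E, e i = v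

set_option maxHeartbeats 1000000 in
open NonrealAux in
/-- There exists a `(3,3,3)`-octahedral system without isolated vertex
that is not realisable by any colourful point configuration in `ℝ²` in general position. -/
theorem exists_nonrealisable_octahedral_system :
    ∃ (V : Fin 3 → Finset ℕ) (E : Finset (Fin 3 → ℕ)),
      (∀ i j : Fin 3, i ≠ j → Disjoint (V i) (V j)) ∧
      (∀ i, (V i).card = 3) ∧
      IsOctahedralSystem V E ∧
      NoIsolatedVertex V E ∧
      ¬ ∃ (S : Fin 3 → Finset (EuclideanSpace ℝ (Fin 2)))
          (φ : Fin 3 → ℕ → EuclideanSpace ℝ (Fin 2)),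
          (∀ i, Set.BijOn (φ i) (V i) (S i)) ∧
          (∀ T : Finset (EuclideanSpace ℝ (Fin 2)),
            (∀ x ∈ T, ∃ i, x ∈ S i) → T.card = 2 →
            AffineIndependent ℝ
              (fun p : ↥(insert (0 : EuclideanSpace ℝ (Fin 2))
                  (T : Set (EuclideanSpace ℝ (Fin 2)))) => (p : EuclideanSpace ℝ (Fin 2)))) ∧
          (∀ e : Fin 3 → ℕ, (∀ i, e i ∈ V i) →
            (e ∈ E ↔ (0 : EuclideanSpace ℝ (Fin 2)) ∈
              convexHull ℝ (Set.range fun i => φ i (e i)))) := by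
  refine ⟨Voct, Eoct, by decide, by decide, ⟨by decide, ?_⟩, by unfold NoIsolatedVertex; decide, ?_⟩
  · -- parity
    intro X hsub hcard
    have key : ∀ A ∈ ({0,1,2} : Finset ℕ).powersetCard 2,
        ∀ B ∈ ({3,4,5} : Finset ℕ).powersetCard 2,
        ∀ C ∈ ({6,7,8} : Finset ℕ).powersetCard 2,
        Even ((Eoct.filter fun e => e 0 ∈ A ∧ e 1 ∈ B ∧ e 2 ∈ C).card) := by decide
    have hre : (Eoct.filter fun e => ∀ i, e i ∈ X i)
        = Eoct.filter fun e => e 0 ∈ X 0 ∧ e 1 ∈ X 1 ∧ e 2 ∈ X 2 :=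
      Finset.filter_congr (fun e _ =>
        ⟨fun h => ⟨h 0, h 1, h 2⟩, fun ⟨h0, h1, h2⟩ i => by fin_cases i <;> assumption⟩)
    rw [hre]
    exact key _ (Finset.mem_powersetCard.mpr ⟨hsub 0, hcard 0⟩)
      _ (Finset.mem_powersetCard.mpr ⟨hsub 1, hcard 1⟩)
      _ (Finset.mem_powersetCard.mpr ⟨hsub 2, hcard 2⟩)
  · rintro ⟨S, φ, hbij, hgen, hiff⟩
    have hS : ∀ (i : Fin 3) (v : ℕ), v ∈ Voct i → φ i v ∈ S i := fun i v hv =>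
      (hbij i).mapsTo (Finset.mem_coe.mpr hv)
    -- no point of the configuration is the origin
    have hnz : ∀ (i : Fin 3) (v : ℕ) (e : Fin 3 → ℕ), (∀ k, e k ∈ Voct k) → e ∉ Eoct →
        e i = v → φ i v ≠ 0 := by
      intro i v e hVk he hei h
      exact he ((hiff e hVk).mpr (subset_convexHull ℝ _
        ⟨i, show φ i (e i) = 0 by rw [hei]; exact h⟩))
    have nzA0 : φ 0 0 ≠ (0 : Pt) := hnz 0 0 ![0,4,6] (by decide) (by decide) rfl
    have nzA1 : φ 0 1 ≠ (0 : Pt) := hnz 0 1 ![1,3,6] (by decide) (by decide) rfl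
    have nzB0 : φ 1 3 ≠ (0 : Pt) := hnz 1 3 ![1,3,6] (by decide) (by decide) rfl
    have nzB1 : φ 1 4 ≠ (0 : Pt) := hnz 1 4 ![0,4,6] (by decide) (by decide) rfl
    have nzC1 : φ 2 7 ≠ (0 : Pt) := hnz 2 7 ![1,3,7] (by decide) (by decide) rfl
    have nzC2 : φ 2 8 ≠ (0 : Pt) := hnz 2 8 ![0,4,8] (by decide) (by decide) rfl
    -- general position: no two configuration points are collinear with the origin
    have keyNC : ∀ p q : Pt, (∃ i, p ∈ S i) → (∃ i, q ∈ S i) → p ≠ 0 → q ≠ 0 → p ≠ q →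
        ¬ Collinear ℝ ({0, p, q} : Set Pt) := by
      intro p q hpS hqS hp hq hpq hcol
      have hmem : ∀ x ∈ ({p, q} : Finset Pt), ∃ i, x ∈ S i := by
        intro x hx
        rcases Finset.mem_insert.mp hx with rfl | hx
        · exact hpS
        · rw [Finset.mem_singleton.mp hx]; exact hqS
      have hcard : ({p, q} : Finset Pt).card = 2 := by
        rw [Finset.card_insert_of_notMem (by simpa using hpq), Finset.card_singleton]
      have hT := hgen {p, q} hmem hcard
      have hsets : (insert (0 : Pt) (({p, q} : Finset Pt) : Set Pt)) = ({0, p, q} : Set Pt) := by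
        rw [Finset.coe_insert, Finset.coe_singleton]
      have hmem3 : ∀ i : Fin 3, (![0, p, q] : Fin 3 → Pt) i ∈
          insert (0 : Pt) (({p, q} : Finset Pt) : Set Pt) := by
        rw [hsets]
        intro i
        fin_cases i
        · exact Set.mem_insert _ _
        · exact Set.mem_insert_of_mem _ (Set.mem_insert _ _)
        · exact Set.mem_insert_of_mem _ (Set.mem_insert_of_mem _ rfl)
      have hinj : Function.Injective
          (fun i : Fin 3 => (⟨![0, p, q] i, hmem3 i⟩ :
            ↥(insert (0 : Pt) (({p, q} : Finset Pt) : Set Pt)))) := by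
        intro a b hab
        have h : (![0, p, q] : Fin 3 → Pt) a = ![0, p, q] b := congrArg Subtype.val hab
        fin_cases a <;> fin_cases b <;>
          simp only [Matrix.cons_val_zero, Matrix.cons_val_one, Matrix.head_cons,
            Matrix.cons_val_two, Matrix.tail_cons, Fin.mk_zero, Fin.mk_one, Fin.isValue] at h <;>
          first
            | rfl
            | exact absurd h.symm hp
            | exact absurd h hp
            | exact absurd h.symm hq
            | exact absurd h hq
            | exact absurd h hpq
            | exact absurd h.symm hpq
      have h3 := hT.comp_embedding
        (⟨fun i : Fin 3 => (⟨![0, p, q] i, hmem3 i⟩ :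
            ↥(insert (0 : Pt) (({p, q} : Finset Pt) : Set Pt))), hinj⟩ : Fin 3 ↪ _)
      have h4 : AffineIndependent ℝ (![0, p, q] : Fin 3 → Pt) := h3
      rw [affineIndependent_iff_not_collinear_set] at h4
      exact h4 hcol
    have detne : ∀ p q : Pt, (∃ i, p ∈ S i) → (∃ i, q ∈ S i) → p ≠ 0 → q ≠ 0 → p ≠ q →
        det2 p q ≠ 0 := by
      intro p q h1 h2 h3 h4 h5 h
      obtain ⟨t, ht⟩ := exists_smul_of_det2_eq_zero h3 h
      exact keyNC p q h1 h2 h3 h4 h5 (collinear_of_smul ht)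
    have noseg : ∀ p q : Pt, (∃ i, p ∈ S i) → (∃ i, q ∈ S i) → p ≠ 0 → q ≠ 0 →
        (0 : Pt) ∈ convexHull ℝ ({p, q} : Set Pt) → False := by
      intro p q h1 h2 h3 h4 hseg
      by_cases hpq : p = q
      · rw [← hpq, Set.pair_eq_singleton, convexHull_singleton] at hseg
        exact h3 hseg.symm
      · rw [convexHull_pair] at hseg
        obtain ⟨α, β, hα, hβ, hsum, heq⟩ := hseg
        by_cases hβ0 : β = 0
        · rw [hβ0, zero_smul, add_zero] at heq
          rw [hβ0, add_zero] at hsum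
          rw [hsum, one_smul] at heq
          exact h3 heq
        · have h2' : β • q = -(α • p) := eq_neg_of_add_eq_zero_right heq
          have hq' : q = (-(β⁻¹ * α)) • p := by
            calc q = (β⁻¹ * β) • q := by rw [inv_mul_cancel₀ hβ0, one_smul]
              _ = β⁻¹ • (β • q) := by rw [mul_smul]
              _ = β⁻¹ • (-(α • p)) := by rw [h2']
              _ = (-(β⁻¹ * α)) • p := by rw [smul_neg, smul_smul, neg_smul]
          exact keyNC p q h1 h2 h3 h4 hpq (collinear_of_smul hq')
    -- the three points of any edge are pairwise distinct
    have distinct : ∀ e : Fin 3 → ℕ, (∀ k, e k ∈ Voct k) → e ∈ Eoct →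
        (∀ k, φ k (e k) ≠ 0) →
        φ 0 (e 0) ≠ φ 1 (e 1) ∧ φ 0 (e 0) ≠ φ 2 (e 2) ∧ φ 1 (e 1) ≠ φ 2 (e 2) := by
      intro e hVk he hnz'
      have hconv := (hiff e hVk).mp he
      refine ⟨fun h => ?_, fun h => ?_, fun h => ?_⟩
      · exact noseg (φ 0 (e 0)) (φ 2 (e 2)) ⟨0, hS 0 _ (hVk 0)⟩ ⟨2, hS 2 _ (hVk 2)⟩
          (hnz' 0) (hnz' 2)
          (convexHull_mono (by rintro x ⟨i, rfl⟩; fin_cases i <;> simp [← h]) hconv)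
      · exact noseg (φ 0 (e 0)) (φ 1 (e 1)) ⟨0, hS 0 _ (hVk 0)⟩ ⟨1, hS 1 _ (hVk 1)⟩
          (hnz' 0) (hnz' 1)
          (convexHull_mono (by rintro x ⟨i, rfl⟩; fin_cases i <;> simp [← h]) hconv)
      · exact noseg (φ 1 (e 1)) (φ 0 (e 0)) ⟨1, hS 1 _ (hVk 1)⟩ ⟨0, hS 0 _ (hVk 0)⟩
          (hnz' 1) (hnz' 0)
          (convexHull_mono (by rintro x ⟨i, rfl⟩; fin_cases i <;> simp [← h]) hconv)
    -- the two sign products attached to every edge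
    have eprod : ∀ e : Fin 3 → ℕ, (∀ k, e k ∈ Voct k) → e ∈ Eoct →
        (∀ k, φ k (e k) ≠ 0) →
        0 < det2 (φ 0 (e 0)) (φ 1 (e 1)) * det2 (φ 1 (e 1)) (φ 2 (e 2)) ∧
        0 < det2 (φ 1 (e 1)) (φ 2 (e 2)) * det2 (φ 2 (e 2)) (φ 0 (e 0)) := by
      intro e hVk he hnz'
      obtain ⟨h01, h02, h12⟩ := distinct e hVk he hnz'
      have hconv := (hiff e hVk).mp he
      rw [range_eq_triple] at hconv
      obtain ⟨α, β, γ, hα, hβ, hγ, hsum, hv⟩ := extract_weights h01 h02 h12 hconv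
      exact edge_products
        (detne _ _ ⟨0, hS 0 _ (hVk 0)⟩ ⟨1, hS 1 _ (hVk 1)⟩ (hnz' 0) (hnz' 1) h01)
        (detne _ _ ⟨1, hS 1 _ (hVk 1)⟩ ⟨2, hS 2 _ (hVk 2)⟩ (hnz' 1) (hnz' 2) h12)
        (detne _ _ ⟨2, hS 2 _ (hVk 2)⟩ ⟨0, hS 0 _ (hVk 0)⟩ (hnz' 2) (hnz' 0) (Ne.symm h02))
        hα hβ hγ hsum hv
    have P1 := eprod ![0,3,7] (by decide) (by decide)
      (by intro k; fin_cases k <;> [exact nzA0; exact nzB0; exact nzC1])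
    have P2 := eprod ![0,3,8] (by decide) (by decide)
      (by intro k; fin_cases k <;> [exact nzA0; exact nzB0; exact nzC2])
    have P3 := eprod ![0,4,7] (by decide) (by decide)
      (by intro k; fin_cases k <;> [exact nzA0; exact nzB1; exact nzC1])
    have P4 := eprod ![1,3,8] (by decide) (by decide)
      (by intro k; fin_cases k <;> [exact nzA1; exact nzB0; exact nzC2])
    have P5 := eprod ![1,4,7] (by decide) (by decide)
      (by intro k; fin_cases k <;> [exact nzA1; exact nzB1; exact nzC1])
    -- sign chains
    have c1 : 0 < det2 (φ 0 1) (φ 1 3) * det2 (φ 0 0) (φ 1 3) :=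
      sgn_trans P4.1 (by rw [mul_comm]; exact P2.1)
    have hx10y01 : 0 < det2 (φ 0 1) (φ 1 3) * det2 (φ 1 3) (φ 2 7) :=
      sgn_trans c1 P1.1
    have c2 : 0 < det2 (φ 1 3) (φ 2 7) * det2 (φ 1 4) (φ 2 7) :=
      sgn_trans P1.2 (by rw [mul_comm]; exact P3.2)
    have hy01z11 : 0 < det2 (φ 1 3) (φ 2 7) * det2 (φ 2 7) (φ 0 1) :=
      sgn_trans c2 P5.2
    exact (show ![1,3,7] ∉ Eoct by decide)
      ((hiff ![1,3,7] (by decide)).mpr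
        (mem_conv_of_signs _ rfl rfl rfl hx10y01 hy01z11))
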